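/- Let p ≥ 1 with p+1 prime. Define the set L ⊆ ℚ of values reachable as products of factors from {1/(p+1), 2/(p+1), ..., p/(p+1)}, where the empty product is 1. Then there is a well-defined function depth : L → ℕ such that for any product of n such factors, depth of its value equals n. Equivalently, if a product of n factors equals a product of m factors (all factors in {1/(p+1),...,p/(p+1)}), then n = m. -/

import Mathlib

lemma val_factor (p : ℕ) (hp : Nat.Prime (p + 1)) (h : ℕ) (h1 : 1 ≤ h) (h2 : h ≤ p) :
    padicValRat (p + 1) ((h : ℚ) / (p + 1)) = -1 := by
  haveI : Fact (Nat.Prime (p + 1)) := ⟨hp⟩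
  have hh0 : (h : ℚ) ≠ 0 := by positivity
  have hq0 : ((p : ℚ) + 1) ≠ 0 := by positivity
  have hcast : ((p : ℚ) + 1) = ((p + 1 : ℕ) : ℚ) := by push_cast; ring
  rw [padicValRat.div hh0 hq0, hcast, padicValRat.of_nat, padicValRat.of_nat,
    padicValNat.eq_zero_of_not_dvd (Nat.not_dvd_of_pos_of_lt (by omega) (by omega)),
    padicValNat.self hp.one_lt]
  simp

lemma val_prod (p : ℕ) (hp : Nat.Prime (p + 1)) (n : ℕ) (f : ℕ → ℚ)
    (hf : ∀ k < n, ∃ h : ℕ, 1 ≤ h ∧ h ≤ p ∧ f k = (h : ℚ) / (p + 1)) :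
    (∏ k ∈ Finset.range n, f k) ≠ 0 ∧
      padicValRat (p + 1) (∏ k ∈ Finset.range n, f k) = -(n : ℤ) := by
  haveI : Fact (Nat.Prime (p + 1)) := ⟨hp⟩
  induction n with
  | zero => simp [padicValRat.one]
  | succ n ih =>
    obtain ⟨hne, hval⟩ := ih (fun k hk => hf k (by omega))
    obtain ⟨h, h1, h2, hfe⟩ := hf n (by omega)
    have hfne : f n ≠ 0 := by
      rw [hfe]; positivity
    rw [Finset.prod_range_succ]
    refine ⟨mul_ne_zero hne hfne, ?_⟩
    rw [padicValRat.mul hne hfne, hval, hfe, val_factor p hp h h1 h2]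
    push_cast; ring

/-- If a product of n factors of the form h/(p+1), h ∈ {1,...,p}, equals a product of m
    such factors, and p+1 is prime, then n = m: the value determines the depth. -/
theorem stmt2 (p : ℕ) (hp1 : 1 ≤ p) (hp : Nat.Prime (p + 1))
    (n m : ℕ) (f g : ℕ → ℚ)
    (hf : ∀ k < n, ∃ h : ℕ, 1 ≤ h ∧ h ≤ p ∧ f k = (h : ℚ) / (p + 1))
    (hg : ∀ k < m, ∃ h : ℕ, 1 ≤ h ∧ h ≤ p ∧ g k = (h : ℚ) / (p + 1))
    (heq : ∏ k ∈ Finset.range n, f k = ∏ k ∈ Finset.range m, g k) :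
    n = m := by
  have h1 := (val_prod p hp n f hf).2
  have h2 := (val_prod p hp m g hg).2
  rw [heq, h2] at h1
  omega
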